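/- Let v = g/f, where f, g are real analytic on 𝕋, f and v are nonconstant, and Z(f) = {x ∈ 𝕋 : f(x) = 0} ≠ ∅. Then there is a constant c₀ = c₀(v) > 0 such that mes{x ∈ 𝕋 : |v(x) − E| < ε} < ε^{c₀} for all E ∈ ℝ and all sufficiently small ε > 0 (the set is taken within the domain where f(x) ≠ 0). -/

import Mathlib

open MeasureTheory Set

private lemma diam_vol {A : Set ℝ} {d : ℝ} (hd : 0 ≤ d)
    (h : ∀ x ∈ A, ∀ y ∈ A, |x - y| ≤ d) :
    volume A ≤ ENNReal.ofReal (2 * d) := by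
  rcases A.eq_empty_or_nonempty with rfl | ⟨x₀, hx₀⟩
  · simp
  · have hsub : A ⊆ Icc (x₀ - d) (x₀ + d) := by
      intro y hy
      have h2 := abs_le.1 (h y hy x₀ hx₀)
      exact ⟨by linarith [h2.1], by linarith [h2.2]⟩
    calc volume A ≤ volume (Icc (x₀ - d) (x₀ + d)) := measure_mono hsub
    _ = ENNReal.ofReal (2 * d) := by rw [Real.volume_Icc]; congr 1; ring

private lemma small_diam {ψ : ℝ → ℝ} (hψ : ContDiff ℝ ((⊤:ℕ∞) : WithTop ℕ∞) ψ) {I : Set ℝ}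
    (hI : I.OrdConnected) {ρ t : ℝ} (hρ : 0 < ρ) (ht : 0 ≤ t)
    (hd : ∀ x ∈ I, ρ ≤ |deriv ψ x|) :
    ∀ x ∈ {z ∈ I | |ψ z| ≤ t}, ∀ y ∈ {z ∈ I | |ψ z| ≤ t}, |x - y| ≤ 2 * t / ρ := by
  have key : ∀ x ∈ {z ∈ I | |ψ z| ≤ t}, ∀ y ∈ {z ∈ I | |ψ z| ≤ t}, x ≤ y →
      y - x ≤ 2 * t / ρ := by
    rintro x ⟨hxI, hxψ⟩ y ⟨hyI, hyψ⟩ hxy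
    rcases eq_or_lt_of_le hxy with rfl | hlt
    · simp; positivity
    · obtain ⟨c, hc, hslope⟩ := exists_deriv_eq_slope ψ hlt
        (hψ.continuous.continuousOn) ((hψ.differentiable (by simp)).differentiableOn)
      have hcI : c ∈ I := hI.out hxI hyI ⟨hc.1.le, hc.2.le⟩
      have h1 : ρ ≤ |ψ y - ψ x| / (y - x) := by
        have := hd c hcI
        rwa [hslope, abs_div, abs_of_pos (by linarith : (0:ℝ) < y - x)] at this
      have h2 : |ψ y - ψ x| ≤ 2 * t := by
        calc |ψ y - ψ x| ≤ |ψ y| + |ψ x| := abs_sub _ _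
        _ ≤ 2 * t := by linarith
      rw [le_div_iff₀ (by linarith : (0:ℝ) < y - x)] at h1
      rw [le_div_iff₀ hρ] at *
      nlinarith
  intro x hx y hy
  rcases le_total x y with h | h
  · rw [abs_sub_comm, abs_of_nonneg (by linarith : (0:ℝ) ≤ y - x)]
    exact key x hx y hy h
  · rw [abs_of_nonneg (by linarith : (0:ℝ) ≤ x - y)]
    exact key y hy x hx h

private lemma sublevel : ∀ k : ℕ, 1 ≤ k → ∀ φ : ℝ → ℝ, ContDiff ℝ ((⊤:ℕ∞) : WithTop ℕ∞) φ →
    ∀ I : Set ℝ, I.OrdConnected → ∀ ρ t : ℝ, 0 < ρ → 0 < t →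
    (∀ x ∈ I, ρ ≤ |iteratedDeriv k φ x|) →
    volume {x ∈ I | |φ x| ≤ t} ≤ ENNReal.ofReal ((4:ℝ)^k * (t/ρ) ^ (((k:ℕ):ℝ)⁻¹)) := by
  intro k hk
  induction k, hk using Nat.le_induction with
  | base =>
    intro φ hφ I hI ρ t hρ ht hd
    simp only [iteratedDeriv_one] at hd
    have h1 := diam_vol (by positivity : (0:ℝ) ≤ 2 * t / ρ) (small_diam hφ hI hρ ht.le hd)
    refine h1.trans (ENNReal.ofReal_le_ofReal ?_)
    have h0 : (((1:ℕ):ℝ))⁻¹ = 1 := by norm_num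
    rw [h0, Real.rpow_one]
    have e : 2 * (2 * t / ρ) = 4^1 * (t/ρ) := by ring
    exact e.le
  | succ k hk IH =>
    intro φ hφ I hI ρ t hρ ht hd
    set ψ := iteratedDeriv k φ with hψdef
    have hψsm : ContDiff ℝ ((⊤:ℕ∞) : WithTop ℕ∞) ψ := by
      rw [hψdef, iteratedDeriv_eq_iterate]
      exact ContDiff.iterate_deriv k hφ
    have hdψ : ∀ x ∈ I, ρ ≤ |deriv ψ x| := by
      intro x hx
      have := hd x hx
      rwa [iteratedDeriv_succ] at this
    -- sign of deriv ψ is constant on I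
    have hcont : Continuous (deriv ψ) := hψsm.continuous_deriv (by exact_mod_cast le_top)
    have hsign : (∀ x ∈ I, 0 < deriv ψ x) ∨ (∀ x ∈ I, deriv ψ x < 0) := by
      by_contra hcon
      push_neg at hcon
      obtain ⟨⟨a, ha, ha'⟩, ⟨b, hb, hb'⟩⟩ := hcon
      have h0 : (0:ℝ) ∈ uIcc (deriv ψ a) (deriv ψ b) := by
        rw [Set.mem_uIcc]; left; exact ⟨ha', hb'⟩
      obtain ⟨c, hc, hc0⟩ := intermediate_value_uIcc (hcont.continuousOn (s := uIcc a b)) h0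
      have hcI : c ∈ I := hI.uIcc_subset ha hb hc
      have := hdψ c hcI
      rw [hc0] at this; simp at this; linarith
    have hconv : Convex ℝ I := convex_iff_ordConnected.mpr hI
    have hmono : MonotoneOn ψ I ∨ AntitoneOn ψ I := by
      rcases hsign with hs | hs
      · left
        exact (strictMonoOn_of_deriv_pos hconv hψsm.continuous.continuousOn
          (fun x hx => hs x (interior_subset hx))).monotoneOn
      · right
        exact (strictAntiOn_of_deriv_neg hconv hψsm.continuous.continuousOn
          (fun x hx => hs x (interior_subset hx))).antitoneOn
    -- the scale s and the quantity u
    set u : ℝ := (t / ρ) ^ ((((k+1:ℕ)):ℝ))⁻¹ with hudef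
    have hu : 0 < u := Real.rpow_pos_of_pos (div_pos ht hρ) _
    have hupow : u ^ (k+1) = t / ρ :=
      Real.rpow_inv_natCast_pow (div_pos ht hρ).le (Nat.succ_ne_zero k)
    set s : ℝ := ρ * u with hsdef
    have hs : 0 < s := mul_pos hρ hu
    have ht_eq : t = ρ * u ^ (k+1) := by rw [hupow]; field_simp
    have hts : t / s = u ^ k := by
      rw [ht_eq, hsdef, pow_succ]; field_simp
    -- the three pieces
    set J : Set ℝ := {x ∈ I | |ψ x| ≤ s} with hJdef
    set Ip : Set ℝ := {x ∈ I | s < ψ x} with hIpdef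
    set Im : Set ℝ := {x ∈ I | ψ x < -s} with hImdef
    have hcover : {x ∈ I | |φ x| ≤ t} ⊆
        {x ∈ J | |φ x| ≤ t} ∪ ({x ∈ Ip | |φ x| ≤ t} ∪ {x ∈ Im | |φ x| ≤ t}) := by
      rintro x ⟨hxI, hxφ⟩
      rcases le_or_gt (|ψ x|) s with h | h
      · exact Or.inl ⟨⟨hxI, h⟩, hxφ⟩
      · rcases le_or_gt (ψ x) 0 with h2 | h2
        · refine Or.inr (Or.inr ⟨⟨hxI, ?_⟩, hxφ⟩)
          rw [abs_of_nonpos h2] at h; linarith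
        · refine Or.inr (Or.inl ⟨⟨hxI, ?_⟩, hxφ⟩)
          rwa [abs_of_pos h2] at h
    -- volume of the J part
    have hvolJ : volume {x ∈ J | |φ x| ≤ t} ≤ ENNReal.ofReal (4 * u) := by
      have h1 : volume J ≤ ENNReal.ofReal (2 * (2 * s / ρ)) :=
        diam_vol (by positivity) (small_diam hψsm hI hρ hs.le hdψ)
      refine (measure_mono (fun x hx => hx.1)).trans (h1.trans (ENNReal.ofReal_le_ofReal ?_))
      rw [hsdef]
      have e : 2 * (2 * (ρ * u) / ρ) = 4 * u := by field_simp; ring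
      exact e.le
    -- Ip and Im are ordConnected
    have hIpord : Ip.OrdConnected := by
      constructor
      rintro x ⟨hxI, hxs⟩ y ⟨hyI, hys⟩ z hz
      have hzI : z ∈ I := hI.out hxI hyI hz
      refine ⟨hzI, ?_⟩
      rcases hmono with hm | hm
      · exact lt_of_lt_of_le hxs (hm hxI hzI hz.1)
      · exact lt_of_lt_of_le hys (hm hzI hyI hz.2)
    have hImord : Im.OrdConnected := by
      constructor
      rintro x ⟨hxI, hxs⟩ y ⟨hyI, hys⟩ z hz
      have hzI : z ∈ I := hI.out hxI hyI hz
      refine ⟨hzI, ?_⟩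
      rcases hmono with hm | hm
      · exact lt_of_le_of_lt (hm hzI hyI hz.2) hys
      · exact lt_of_le_of_lt (hm hxI hzI hz.1) hxs
    -- apply IH on Ip and Im
    have hkR : ((k:ℕ):ℝ) ≠ 0 := Nat.cast_ne_zero.mpr (by omega)
    have hpow_u : ((u ^ k) ^ (((k:ℕ):ℝ))⁻¹) = u := Real.pow_rpow_inv_natCast hu.le (by omega)
    have hvolIp : volume {x ∈ Ip | |φ x| ≤ t} ≤ ENNReal.ofReal ((4:ℝ)^k * u) := by
      have := IH φ hφ Ip hIpord s t hs ht (fun x hx => by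
        have : s < ψ x := hx.2
        calc s ≤ ψ x := this.le
        _ ≤ |ψ x| := le_abs_self _)
      rwa [hts, hpow_u] at this
    have hvolIm : volume {x ∈ Im | |φ x| ≤ t} ≤ ENNReal.ofReal ((4:ℝ)^k * u) := by
      have := IH φ hφ Im hImord s t hs ht (fun x hx => by
        have h2 : ψ x < -s := hx.2
        rw [abs_of_neg (by linarith : ψ x < 0)]; linarith)
      rwa [hts, hpow_u] at this
    -- combine
    calc volume {x ∈ I | |φ x| ≤ t}
        ≤ volume ({x ∈ J | |φ x| ≤ t} ∪ ({x ∈ Ip | |φ x| ≤ t} ∪ {x ∈ Im | |φ x| ≤ t})) :=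
          measure_mono hcover
      _ ≤ volume {x ∈ J | |φ x| ≤ t} +
          (volume {x ∈ Ip | |φ x| ≤ t} + volume {x ∈ Im | |φ x| ≤ t}) :=
          (measure_union_le _ _).trans (by gcongr; exact measure_union_le _ _)
      _ ≤ ENNReal.ofReal (4 * u) + (ENNReal.ofReal ((4:ℝ)^k * u) + ENNReal.ofReal ((4:ℝ)^k * u)) := by
          gcongr
      _ ≤ ENNReal.ofReal ((4:ℝ)^(k+1) * (t/ρ) ^ ((((k+1:ℕ)):ℝ))⁻¹) := by
          rw [← ENNReal.ofReal_add (by positivity) (by positivity),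
            ← ENNReal.ofReal_add (by positivity) (by positivity)]
          refine ENNReal.ofReal_le_ofReal ?_
          rw [← hudef]
          have h4 : (4:ℝ) ≤ 4^k := by
            calc (4:ℝ) = 4^1 := (pow_one 4).symm
            _ ≤ 4^k := pow_le_pow_right₀ (by norm_num) hk
          have h5 : 4 * u ≤ 4^k * u := mul_le_mul_of_nonneg_right h4 hu.le
          have h6 : (0:ℝ) ≤ 4^k * u := by positivity
          rw [pow_succ]
          nlinarith [h5, h6]

private lemma eq_zero_of_iteratedDeriv_zero {h : ℝ → ℝ}
    (hh : AnalyticOnNhd ℝ h Set.univ) {x₀ : ℝ} (hz : ∀ n, iteratedDeriv n h x₀ = 0) :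
    ∀ y, h y = 0 := by
  obtain ⟨p, r, hp⟩ := hh x₀ trivial
  have hev : h =ᶠ[nhds x₀] 0 := by
    have hball : ∀ z ∈ Metric.eball x₀ r, h z = 0 := by
      intro z hz'
      have hy : z - x₀ ∈ Metric.eball (0:ℝ) r := by
        rw [Metric.mem_eball] at hz' ⊢
        rwa [show edist (z - x₀) 0 = edist z x₀ by simp [edist_dist, dist_eq_norm]]
      have hs := hp.hasSum_iteratedFDeriv hy
      have hzero : ∀ n : ℕ,
          ((n.factorial : ℝ)⁻¹ • iteratedFDeriv ℝ n h x₀ fun _ => z - x₀) = 0 := by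
        intro n
        rw [iteratedFDeriv_apply_eq_iteratedDeriv_mul_prod, hz n]
        simp
      have h0 : HasSum (fun _ : ℕ => (0:ℝ)) (h (x₀ + (z - x₀))) := by
        simpa only [hzero] using hs
      have := h0.unique hasSum_zero
      simpa using this
    exact Filter.eventuallyEq_of_mem (Metric.eball_mem_nhds x₀ hp.r_pos) hball
  have := hh.eqOn_zero_of_preconnected_of_eventuallyEq_zero isPreconnected_univ
    (Set.mem_univ x₀) hev
  intro y; exact this (Set.mem_univ y)

/-- **Łojasiewicz inequality for meromorphic potentials on the torus.**
Let `v = g/f` with `f, g` real analytic on `𝕋 = ℝ/ℤ` (encoded as `1`-periodic real analytic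
functions on `ℝ`), `f` and `v` nonconstant, and `Z(f) = {x : f x = 0} ≠ ∅`.  Then there is
`c₀ = c₀(v) > 0` such that `mes {x ∈ 𝕋 : |v x - E| < ε} < ε ^ c₀` for all `E ∈ ℝ` and all
sufficiently small `ε > 0` (the set being taken within the domain where `f x ≠ 0`). -/
theorem statement3 (f g : ℝ → ℝ)
    (hfper : Function.Periodic f 1) (hgper : Function.Periodic g 1)
    (hfan : AnalyticOnNhd ℝ f Set.univ) (hgan : AnalyticOnNhd ℝ g Set.univ)
    (hfnc : ∃ x y : ℝ, f x ≠ f y)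
    (hvnc : ∃ x y : ℝ, f x ≠ 0 ∧ f y ≠ 0 ∧ g x / f x ≠ g y / f y)
    (hZ : ∃ x : ℝ, f x = 0) :
    ∃ c₀ > (0 : ℝ), ∃ ε₁ > (0 : ℝ), ∀ E : ℝ, ∀ ε : ℝ, 0 < ε → ε < ε₁ →
      volume {x ∈ Ico (0 : ℝ) 1 | f x ≠ 0 ∧ |g x / f x - E| < ε} <
        ENNReal.ofReal (ε ^ c₀) := by
  classical
  have hfsm : ContDiff ℝ ((⊤:ℕ∞) : WithTop ℕ∞) f := hfan.contDiff
  have hgsm : ContDiff ℝ ((⊤:ℕ∞) : WithTop ℕ∞) g := hgan.contDiff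
  -- derivative formula for the pencil
  have hDer : ∀ (a b : ℝ) (n : ℕ) (x : ℝ),
      iteratedDeriv n (fun y => a * g y + b * f y) x =
        a * iteratedDeriv n g x + b * iteratedDeriv n f x := by
    intro a b n x
    have h1 : (fun y => a * g y + b * f y) = ((fun y => a * g y) + fun y => b * f y) := rfl
    rw [h1, ← iteratedDerivWithin_univ,
      iteratedDerivWithin_add (Set.mem_univ x) uniqueDiffOn_univ
        (((contDiff_const.mul hgsm).of_le (m := n) (by exact_mod_cast (le_top : (n:ℕ∞) ≤ ⊤))).contDiffWithinAt)
        (((contDiff_const.mul hfsm).of_le (m := n) (by exact_mod_cast (le_top : (n:ℕ∞) ≤ ⊤))).contDiffWithinAt),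
      iteratedDerivWithin_const_mul (Set.mem_univ x) uniqueDiffOn_univ a
        ((hgsm.of_le (m := n) (by exact_mod_cast (le_top : (n:ℕ∞) ≤ ⊤))).contDiffWithinAt),
      iteratedDerivWithin_const_mul (Set.mem_univ x) uniqueDiffOn_univ b
        ((hfsm.of_le (m := n) (by exact_mod_cast (le_top : (n:ℕ∞) ≤ ⊤))).contDiffWithinAt),
      iteratedDerivWithin_univ, iteratedDerivWithin_univ]
  -- the family of derivative functions on parameter space
  set A : ℕ → ((ℝ × ℝ) × ℝ) → ℝ := fun n q =>
    q.1.1 * iteratedDeriv n g q.2 + q.1.2 * iteratedDeriv n f q.2 with hAdef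
  have hAcont : ∀ n, Continuous (A n) := by
    intro n
    apply Continuous.add
    · exact (continuous_fst.comp continuous_fst).mul
        ((hgsm.continuous_iteratedDeriv n (by exact_mod_cast le_top)).comp continuous_snd)
    · exact (continuous_snd.comp continuous_fst).mul
        ((hfsm.continuous_iteratedDeriv n (by exact_mod_cast le_top)).comp continuous_snd)
  set K : Set ((ℝ × ℝ) × ℝ) := (Metric.sphere (0:ℝ×ℝ) 1) ×ˢ (Icc (0:ℝ) 1) with hKdef
  have hK : IsCompact K := (isCompact_sphere _ _).prod isCompact_Icc
  -- nonvanishing of some derivative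
  have hnz : ∀ q ∈ K, ∃ n, A n q ≠ 0 := by
    rintro ⟨p, x⟩ ⟨hp, hx⟩
    by_contra hcon
    push_neg at hcon
    have hp0 : p ≠ 0 := by
      intro h0
      rw [mem_sphere_zero_iff_norm, h0, norm_zero] at hp
      norm_num at hp
    have hh : AnalyticOnNhd ℝ (fun y => p.1 * g y + p.2 * f y) Set.univ := fun z _ =>
      ((analyticAt_const.mul (hgan z trivial)).add (analyticAt_const.mul (hfan z trivial)))
    have hz0 : ∀ n, iteratedDeriv n (fun y => p.1 * g y + p.2 * f y) x = 0 := by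
      intro n; rw [hDer]; exact hcon n
    have hzero : ∀ y, p.1 * g y + p.2 * f y = 0 := eq_zero_of_iteratedDeriv_zero hh hz0
    by_cases ha : p.1 = 0
    · have hb : p.2 ≠ 0 := by
        intro hb; exact hp0 (Prod.ext ha hb)
      obtain ⟨x', y', hxy⟩ := hfnc
      have h1 : f x' = 0 := by have := hzero x'; rw [ha] at this; simpa [hb] using this
      have h2 : f y' = 0 := by have := hzero y'; rw [ha] at this; simpa [hb] using this
      exact hxy (h1.trans h2.symm)
    · obtain ⟨x', y', hfx, hfy, hne⟩ := hvnc
      have e1 : g x' / f x' = -p.2 / p.1 := by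
        have h := hzero x'
        field_simp
        nlinarith [h]
      have e2 : g y' / f y' = -p.2 / p.1 := by
        have h := hzero y'
        field_simp
        nlinarith [h]
      exact hne (e1.trans e2.symm)
  -- selection of radii, orders and lower bounds
  have hsel0 : ∀ q : (ℝ × ℝ) × ℝ, ∃ (rr η : ℝ) (n : ℕ), q ∈ K →
      (0 < rr ∧ 0 < η ∧ ∀ q' ∈ Metric.ball q rr, η ≤ |A n q'|) := by
    intro q
    by_cases hq : q ∈ K
    · obtain ⟨n, hn⟩ := hnz q hq
      have hη : 0 < |A n q| / 2 := by positivity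
      have hopen : IsOpen {q' | |A n q| / 2 < |A n q'|} :=
        isOpen_lt continuous_const (hAcont n).abs
      have hqin : q ∈ {q' | |A n q| / 2 < |A n q'|} := by
        simp only [Set.mem_setOf_eq]
        linarith [abs_pos.mpr hn]
      obtain ⟨rr, hrr, hball⟩ := Metric.isOpen_iff.1 hopen q hqin
      exact ⟨rr, |A n q| / 2, n, fun _ => ⟨hrr, hη, fun q' hq' => (hball hq').le⟩⟩
    · exact ⟨1, 1, 0, fun h => absurd h hq⟩
  choose rad eta nn hsel using hsel0
  obtain ⟨T, hTK, hTcov⟩ := hK.elim_nhds_subcover (fun q => Metric.ball q (rad q))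
    (fun q hq => Metric.ball_mem_nhds q (hsel q hq).1)
  have hq0K : (((1:ℝ), (0:ℝ)), (0:ℝ)) ∈ K := by
    constructor
    · rw [mem_sphere_zero_iff_norm, Prod.norm_def]
      norm_num
    · exact ⟨le_refl 0, zero_le_one⟩
  have hTne : T.Nonempty := by
    rcases Finset.eq_empty_or_nonempty T with rfl | h
    · exfalso; have := hTcov hq0K; simpa using this
    · exact h
  set N : ℕ := max 1 (T.sup nn) with hNdef
  have hN1 : 1 ≤ N := le_max_left _ _
  have hNcast : (0:ℝ) < (N:ℝ) := by exact_mod_cast hN1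
  set η₀ : ℝ := T.inf' hTne eta with hη₀def
  have hη₀ : 0 < η₀ := by
    rw [hη₀def, Finset.lt_inf'_iff]
    exact fun q hq => (hsel q (hTK q hq)).2.1
  have hη₀le : ∀ q ∈ T, η₀ ≤ eta q := fun q hq => Finset.inf'_le _ hq
  -- the main uniform estimate
  have main : ∀ p ∈ Metric.sphere (0:ℝ×ℝ) 1, ∀ t : ℝ, 0 < t → t < min η₀ 1 →
      volume {x ∈ Icc (0:ℝ) 1 | |p.1 * g x + p.2 * f x| ≤ t} ≤
        ENNReal.ofReal ((T.card : ℝ) * ((4:ℝ)^N * (t/η₀) ^ (((N:ℕ):ℝ)⁻¹))) := by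
    intro p hp t ht ht1
    set φ : ℝ → ℝ := fun y => p.1 * g y + p.2 * f y with hφdef
    have hφsm : ContDiff ℝ ((⊤:ℕ∞) : WithTop ℕ∞) φ :=
      (contDiff_const.mul hgsm).add (contDiff_const.mul hfsm)
    set W : ((ℝ × ℝ) × ℝ) → Set ℝ := fun q =>
      if p ∈ Metric.ball q.1 (rad q) then Metric.ball q.2 (rad q) else ∅ with hWdef
    have hWord : ∀ q, (W q).OrdConnected := by
      intro q
      rw [hWdef]
      dsimp only
      split
      · rw [Real.ball_eq_Ioo]; exact ordConnected_Ioo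
      · exact ordConnected_empty
    have hWd : ∀ q ∈ T, ∀ x ∈ W q, eta q ≤ |iteratedDeriv (nn q) φ x| := by
      intro q hq x hx
      by_cases hpq : p ∈ Metric.ball q.1 (rad q)
      · have hx' : x ∈ Metric.ball q.2 (rad q) := by
          rw [hWdef] at hx; simpa [hpq] using hx
        have hmem : ((p, x) : (ℝ × ℝ) × ℝ) ∈ Metric.ball q (rad q) := by
          rw [Metric.mem_ball, Prod.dist_eq]
          exact max_lt (Metric.mem_ball.1 hpq) (Metric.mem_ball.1 hx')
        have h2 := (hsel q (hTK q hq)).2.2 (p, x) hmem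
        rw [hAdef] at h2
        simpa [hφdef, hDer] using h2
      · rw [hWdef] at hx; simp [hpq] at hx
    have hcov' : {x ∈ Icc (0:ℝ) 1 | |φ x| ≤ t} ⊆ ⋃ q ∈ T, {x ∈ W q | |φ x| ≤ t} := by
      rintro x ⟨hx1, hx2⟩
      have hqmem : ((p, x) : (ℝ × ℝ) × ℝ) ∈ K := ⟨hp, hx1⟩
      have := hTcov hqmem
      rw [Set.mem_iUnion₂] at this
      obtain ⟨q, hqT, hqball⟩ := this
      rw [Metric.mem_ball, Prod.dist_eq] at hqball
      have hb1 : p ∈ Metric.ball q.1 (rad q) :=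
        Metric.mem_ball.2 (lt_of_le_of_lt (le_max_left _ _) hqball)
      have hb2 : x ∈ Metric.ball q.2 (rad q) :=
        Metric.mem_ball.2 (lt_of_le_of_lt (le_max_right _ _) hqball)
      rw [Set.mem_iUnion₂]
      refine ⟨q, hqT, ⟨?_, hx2⟩⟩
      rw [hWdef]; simpa [hb1] using hb2
    have hptw : ∀ q ∈ T, volume {x ∈ W q | |φ x| ≤ t} ≤
        ENNReal.ofReal ((4:ℝ)^N * (t/η₀) ^ (((N:ℕ):ℝ)⁻¹)) := by
      intro q hq
      have hqK := hTK q hq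
      have hetaq : 0 < eta q := (hsel q hqK).2.1
      have htq : t < eta q := lt_of_lt_of_le (lt_of_lt_of_le ht1 (min_le_left _ _)) (hη₀le q hq)
      by_cases hnq : nn q = 0
      · have hempty : {x ∈ W q | |φ x| ≤ t} = ∅ := by
          ext x
          simp only [Set.mem_setOf_eq, Set.mem_empty_iff_false, iff_false, not_and]
          intro hxW hxφ
          have := hWd q hq x hxW
          rw [hnq, iteratedDeriv_zero] at this
          linarith
        rw [hempty]
        simp
      · have h1 : 1 ≤ nn q := Nat.one_le_iff_ne_zero.mpr hnq
        have hnN : nn q ≤ N := le_trans (Finset.le_sup hq) (le_max_right _ _)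
        have hsub := sublevel (nn q) h1 φ hφsm (W q) (hWord q) (eta q) t hetaq ht (hWd q hq)
        refine hsub.trans (ENNReal.ofReal_le_ofReal ?_)
        have hb1 : (4:ℝ)^(nn q) ≤ 4^N := pow_le_pow_right₀ (by norm_num) hnN
        have hx1 : (0:ℝ) < t / eta q := div_pos ht hetaq
        have hx2 : t / eta q ≤ 1 := by
          rw [div_le_one hetaq]; exact htq.le
        have hexp : ((N:ℝ))⁻¹ ≤ ((nn q : ℕ):ℝ)⁻¹ := by
          apply inv_anti₀
          · exact_mod_cast h1
          · exact_mod_cast hnN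
        have hb2 : (t / eta q) ^ (((nn q : ℕ):ℝ))⁻¹ ≤ (t / η₀) ^ (((N:ℕ):ℝ))⁻¹ := by
          calc (t / eta q) ^ (((nn q : ℕ):ℝ))⁻¹ ≤ (t / eta q) ^ (((N:ℕ):ℝ))⁻¹ :=
            Real.rpow_le_rpow_of_exponent_ge hx1 hx2 hexp
          _ ≤ (t / η₀) ^ (((N:ℕ):ℝ))⁻¹ := by
              apply Real.rpow_le_rpow hx1.le
              · exact div_le_div_of_nonneg_left ht.le hη₀ (hη₀le q hq)
              · positivity
        apply mul_le_mul hb1 hb2 (by positivity) (by positivity)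
    calc volume {x ∈ Icc (0:ℝ) 1 | |φ x| ≤ t}
        ≤ volume (⋃ q ∈ T, {x ∈ W q | |φ x| ≤ t}) := measure_mono hcov'
      _ ≤ ∑ q ∈ T, volume {x ∈ W q | |φ x| ≤ t} := measure_biUnion_finset_le T _
      _ ≤ ∑ _q ∈ T, ENNReal.ofReal ((4:ℝ)^N * (t/η₀) ^ (((N:ℕ):ℝ)⁻¹)) :=
          Finset.sum_le_sum hptw
      _ = T.card • ENNReal.ofReal ((4:ℝ)^N * (t/η₀) ^ (((N:ℕ):ℝ)⁻¹)) := by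
          rw [Finset.sum_const]
      _ = ENNReal.ofReal ((T.card : ℝ) * ((4:ℝ)^N * (t/η₀) ^ (((N:ℕ):ℝ)⁻¹))) := by
          rw [nsmul_eq_mul, ← ENNReal.ofReal_natCast T.card,
            ← ENNReal.ofReal_mul (by positivity)]
  -- bound for |f| on [0,1]
  obtain ⟨C, hC⟩ := isCompact_Icc.exists_bound_of_continuousOn
    (f := f) (hfsm.continuous.continuousOn (s := Icc (0:ℝ) 1))
  set M : ℝ := max C 1 with hMdef
  have hM1 : (1:ℝ) ≤ M := le_max_right _ _
  have hM0 : (0:ℝ) < M := lt_of_lt_of_le one_pos hM1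
  have hMf : ∀ x ∈ Icc (0:ℝ) 1, |f x| ≤ M := fun x hx =>
    le_trans (hC x hx) (le_max_left _ _)
  set B : ℝ := (T.card : ℝ) * ((4:ℝ)^N * (M/η₀) ^ (((N:ℕ):ℝ)⁻¹)) with hBdef
  set B' : ℝ := max B 1 with hB'def
  have hB'1 : (1:ℝ) ≤ B' := le_max_right _ _
  have hB'0 : (0:ℝ) < B' := lt_of_lt_of_le one_pos hB'1
  have hBB' : B ≤ B' := le_max_left _ _
  refine ⟨(2*(N:ℝ))⁻¹, by positivity, min ((min η₀ 1)/M) (((2*B')⁻¹)^(2*N)), ?_, ?_⟩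
  · apply lt_min
    · have : (0:ℝ) < min η₀ 1 := lt_min hη₀ one_pos
      positivity
    · positivity
  intro E ε hε hε₁
  set m : ℝ := max 1 |E| with hmdef
  have hm1 : (1:ℝ) ≤ m := le_max_left _ _
  have hm0 : (0:ℝ) < m := lt_of_lt_of_le one_pos hm1
  set p : ℝ × ℝ := (m⁻¹, -E * m⁻¹) with hpdef
  have hpsph : p ∈ Metric.sphere (0:ℝ×ℝ) 1 := by
    rw [mem_sphere_zero_iff_norm, Prod.norm_def]
    have h1 : ‖p.1‖ = 1 * m⁻¹ := by
      rw [hpdef];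
      simp only [Real.norm_eq_abs, abs_inv, abs_of_pos hm0, one_mul]
    have h2 : ‖p.2‖ = |E| * m⁻¹ := by
      rw [hpdef]
      simp only [Real.norm_eq_abs, abs_mul, abs_neg, abs_inv, abs_of_pos hm0]
    rw [h1, h2, ← max_mul_of_nonneg _ _ (inv_nonneg.mpr hm0.le), ← hmdef,
      mul_inv_cancel₀ hm0.ne']
  set t : ℝ := M * ε with htdef
  have ht : 0 < t := mul_pos hM0 hε
  have hε' : ε < (min η₀ 1)/M := lt_of_lt_of_le hε₁ (min_le_left _ _)
  have ht1 : t < min η₀ 1 := by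
    rw [htdef, mul_comm]
    exact (lt_div_iff₀ hM0).1 hε'
  have hsub : {x ∈ Ico (0:ℝ) 1 | f x ≠ 0 ∧ |g x / f x - E| < ε} ⊆
      {x ∈ Icc (0:ℝ) 1 | |p.1 * g x + p.2 * f x| ≤ t} := by
    rintro x ⟨hx1, hfx, hvx⟩
    refine ⟨Ico_subset_Icc_self hx1, ?_⟩
    have e1 : p.1 * g x + p.2 * f x = m⁻¹ * (g x - E * f x) := by rw [hpdef]; ring
    have e2 : g x - E * f x = f x * (g x / f x - E) := by field_simp
    rw [e1, e2, abs_mul, abs_mul]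
    have h3 : |m⁻¹| ≤ 1 := by
      rw [abs_of_pos (inv_pos.mpr hm0)]
      exact inv_le_one_of_one_le₀ hm1
    calc |m⁻¹| * (|f x| * |g x / f x - E|) ≤ 1 * (M * ε) := by
          apply mul_le_mul h3 ?_ (by positivity) zero_le_one
          exact mul_le_mul (hMf x (Ico_subset_Icc_self hx1)) hvx.le (abs_nonneg _) hM0.le
      _ = t := by rw [htdef]; ring
  have hmain := main p hpsph t ht ht1
  have hle := (measure_mono hsub).trans hmain
  refine lt_of_le_of_lt hle ?_
  rw [ENNReal.ofReal_lt_ofReal_iff (Real.rpow_pos_of_pos hε _)]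
  -- rewrite the left side as B * ε ^ (1/N)
  have hεN : (0:ℝ) ≤ ε := hε.le
  have hLHS : (T.card : ℝ) * ((4:ℝ)^N * (t/η₀) ^ (((N:ℕ):ℝ)⁻¹)) =
      B * ε ^ (((N:ℕ):ℝ)⁻¹) := by
    rw [hBdef, htdef]
    have e3 : M * ε / η₀ = (M / η₀) * ε := by ring
    rw [e3, Real.mul_rpow (by positivity) hεN]
    ring
  rw [hLHS]
  set c : ℝ := (2*(N:ℝ))⁻¹ with hcdef
  have hc : (0:ℝ) < c := by rw [hcdef]; positivity
  have hNR : (((N:ℕ):ℝ))⁻¹ = c + c := by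
    rw [hcdef]; field_simp; norm_num
  rw [hNR, Real.rpow_add hε]
  -- the key smallness of ε ^ c
  have hεlt : ε < ((2*B')⁻¹)^(2*N) := lt_of_lt_of_le hε₁ (min_le_right _ _)
  have h2N : (((2*N:ℕ)):ℝ)⁻¹ = c := by rw [hcdef]; push_cast; ring
  have hpr : ((((2*B')⁻¹)^(2*N) : ℝ)) ^ c = (2*B')⁻¹ := by
    rw [← h2N]
    exact Real.pow_rpow_inv_natCast (by positivity) (by omega)
  have hεc : ε ^ c < (2*B')⁻¹ := by
    calc ε ^ c < (((2*B')⁻¹)^(2*N) : ℝ) ^ c := Real.rpow_lt_rpow hεN hεlt hc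
    _ = (2*B')⁻¹ := hpr
  have h9 : B * ε ^ c ≤ B' * (2*B')⁻¹ :=
    mul_le_mul hBB' hεc.le (Real.rpow_nonneg hεN _) hB'0.le
  have h10 : B' * (2*B')⁻¹ = 2⁻¹ := by field_simp
  have hεcpos : (0:ℝ) < ε ^ c := Real.rpow_pos_of_pos hε _
  calc B * (ε ^ c * ε ^ c) = (B * ε ^ c) * ε ^ c := by ring
    _ < 1 * ε ^ c := by
        apply mul_lt_mul_of_pos_right ?_ hεcpos
        rw [h10] at h9; linarith
    _ = ε ^ c := one_mul _
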